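/- The function Δ₆ has a first-order pole at s = 1: ‖Δ₆(s)‖ tends to +∞ as s → 1 within ℂ \ {1} (the punctured neighbourhood filter 𝓝[≠] 1), and there exists a nonzero complex constant c such that (s−1)·Δ₆(s) tends to c as s → 1 within ℂ \ {1}. -/

import Mathlib

set_option maxHeartbeats 1000000


open Filter

noncomputable def D (s : ℂ) : ℂ :=
  ((Real.pi ^ (-(1/4) : ℝ) : ℝ) * Complex.Gamma s +
    (Real.pi ^ ((1/4) : ℝ) : ℝ) * Complex.Gamma (s - 1/2)) / Complex.Gamma (s - 1/4)

noncomputable def Δ₆ (s : ℂ) : ℂ :=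
  (completedRiemannZeta (2 * s) + completedRiemannZeta (2 * s - 1)) /
    (completedRiemannZeta (2 * s - 1/2) * D s)

open Complex Real Topology in
lemma D_one_ne_zero : D 1 ≠ 0 := by
  have hΓ34 : Complex.Gamma ((1 : ℂ) - 1/4) ≠ 0 := by
    apply Complex.Gamma_ne_zero
    intro m
    rw [show ((1:ℂ) - 1/4) = ((3/4 : ℝ) : ℂ) by norm_num]
    intro h
    have : (3/4 : ℝ) = -(m : ℝ) := by exact_mod_cast h
    have : (0:ℝ) ≤ (m:ℝ) := m.cast_nonneg
    linarith
  have h12 : ((1:ℂ) - 1/2) = 1/2 := by norm_num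
  rw [D, h12, Complex.Gamma_one, Complex.Gamma_one_half_eq]
  apply div_ne_zero _ hΓ34
  rw [show ((1/2:ℂ)) = ((1/2:ℝ):ℂ) by norm_num, ← Complex.ofReal_cpow pi_pos.le, mul_one,
    ← Complex.ofReal_mul, ← Complex.ofReal_add, Complex.ofReal_ne_zero]
  positivity

open Complex Real Topology in
lemma Lambda_three_halves_ne_zero : completedRiemannZeta (3/2) ≠ 0 := by
  intro h
  have hre : (1:ℝ) < ((3/2 : ℂ)).re := by norm_num
  have := riemannZeta_ne_zero_of_one_lt_re hre
  rw [riemannZeta_def_of_ne_zero (by norm_num), h, zero_div] at this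
  exact this rfl

theorem Delta6_pole_at_one :
    Tendsto (fun s : ℂ => ‖Δ₆ s‖) (nhdsWithin 1 {(1 : ℂ)}ᶜ) atTop ∧
    ∃ c : ℂ, c ≠ 0 ∧
      Tendsto (fun s : ℂ => (s - 1) * Δ₆ s) (nhdsWithin 1 {(1 : ℂ)}ᶜ) (nhds c) := by
  classical
  have hmap : Tendsto (fun s : ℂ => 2 * s - 1) (nhdsWithin 1 {(1:ℂ)}ᶜ) (nhdsWithin 1 {(1:ℂ)}ᶜ) := by
    rw [tendsto_nhdsWithin_iff]
    constructor
    · have : Tendsto (fun s : ℂ => 2 * s - 1) (nhds 1) (nhds (2 * 1 - 1)) := by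
        exact ((continuous_const.mul continuous_id).sub continuous_const).tendsto 1
      rw [show (2*(1:ℂ)-1) = 1 by norm_num] at this
      exact this.mono_left nhdsWithin_le_nhds
    · filter_upwards [self_mem_nhdsWithin] with s hs
      simp only [Set.mem_compl_iff, Set.mem_singleton_iff] at hs ⊢
      intro h
      exact hs (by linear_combination h / 2)
  -- (s-1) * Λ(2s-1) → 1/2
  have hA : Tendsto (fun s : ℂ => (s - 1) * completedRiemannZeta (2 * s - 1))
      (nhdsWithin 1 {(1:ℂ)}ᶜ) (nhds (1/2)) := by
    have := (completedRiemannZeta_residue_one.comp hmap).const_mul (1/2 : ℂ)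
    rw [mul_one] at this
    refine this.congr fun s => ?_
    simp only [Function.comp_apply]
    ring
  -- (s-1) * Λ(2s) → 0
  have hA2 : Tendsto (fun s : ℂ => (s - 1) * completedRiemannZeta (2 * s))
      (nhdsWithin 1 {(1:ℂ)}ᶜ) (nhds 0) := by
    have hc : ContinuousAt (fun s : ℂ => completedRiemannZeta (2 * s)) 1 := by
      have h2 : ContinuousAt completedRiemannZeta (2 * 1) :=
        (differentiableAt_completedZeta (by norm_num) (by norm_num)).continuousAt
      exact h2.comp ((continuous_const.mul continuous_id).continuousAt)
    have hsub : Tendsto (fun s : ℂ => s - 1) (nhds 1) (nhds 0) := by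
      have h' := tendsto_id.sub (tendsto_const_nhds (x := (1:ℂ)) (f := nhds 1))
      rwa [sub_self] at h' 
    have := hsub.mul hc.tendsto
    rw [zero_mul] at this
    exact this.mono_left nhdsWithin_le_nhds
  -- denominator → Λ(3/2) * D 1
  have hden : Tendsto (fun s : ℂ => completedRiemannZeta (2 * s - 1/2) * D s)
      (nhdsWithin 1 {(1:ℂ)}ᶜ) (nhds (completedRiemannZeta (3/2) * D 1)) := by
    have hΛ : ContinuousAt (fun s : ℂ => completedRiemannZeta (2 * s - 1/2)) 1 := by
      have h32 : ContinuousAt completedRiemannZeta (2 * 1 - 1/2) :=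
        (differentiableAt_completedZeta (by norm_num) (by norm_num)).continuousAt
      exact ContinuousAt.comp (f := fun s : ℂ => 2 * s - 1/2) h32
        (((continuous_const.mul continuous_id).sub continuous_const).continuousAt)
    have hΓ : ∀ a : ℂ, (∀ m : ℕ, a ≠ -m) → ContinuousAt Complex.Gamma a := fun a ha =>
      (Complex.differentiableAt_Gamma a ha).continuousAt
    have hpos : ∀ x : ℝ, 0 < x → ∀ m : ℕ, (x : ℂ) ≠ -m := by
      intro x hx m h
      have : x = -(m : ℝ) := by exact_mod_cast h
      have : (0:ℝ) ≤ (m:ℝ) := m.cast_nonneg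
      linarith
    have hΓ34ne : Complex.Gamma ((1:ℂ) - 1/4) ≠ 0 := by
      apply Complex.Gamma_ne_zero
      rw [show ((1:ℂ) - 1/4) = ((3/4:ℝ):ℂ) by norm_num]
      exact hpos _ (by norm_num)
    have hg1 : ContinuousAt (fun s : ℂ => Complex.Gamma s) 1 :=
      hΓ 1 (by simpa using hpos 1 one_pos)
    have hg2 : ContinuousAt (fun s : ℂ => Complex.Gamma (s - 1/2)) 1 := by
      have hG : ContinuousAt Complex.Gamma ((1:ℂ) - 1/2) := by
        apply hΓ
        rw [show ((1:ℂ) - 1/2) = ((1/2:ℝ):ℂ) by norm_num]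
        exact hpos _ (by norm_num)
      exact ContinuousAt.comp (f := fun s : ℂ => s - 1/2) hG
        (continuousAt_id.sub continuousAt_const)
    have hg3 : ContinuousAt (fun s : ℂ => Complex.Gamma (s - 1/4)) 1 := by
      have hG : ContinuousAt Complex.Gamma ((1:ℂ) - 1/4) := by
        apply hΓ
        rw [show ((1:ℂ) - 1/4) = ((3/4:ℝ):ℂ) by norm_num]
        exact hpos _ (by norm_num)
      exact ContinuousAt.comp (f := fun s : ℂ => s - 1/4) hG
        (continuousAt_id.sub continuousAt_const)
    have hD : ContinuousAt D 1 := by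
      unfold D
      exact ((continuousAt_const.mul hg1).add (continuousAt_const.mul hg2)).div hg3 hΓ34ne
    have : Tendsto (fun s : ℂ => completedRiemannZeta (2 * s - 1/2) * D s) (nhds 1)
        (nhds (completedRiemannZeta (2 * 1 - 1/2) * D 1)) := (hΛ.mul hD).tendsto
    rw [show (2 * (1:ℂ) - 1/2) = 3/2 by norm_num] at this
    exact this.mono_left nhdsWithin_le_nhds
  have hdne : completedRiemannZeta (3/2) * D 1 ≠ 0 :=
    mul_ne_zero Lambda_three_halves_ne_zero D_one_ne_zero
  set c : ℂ := (0 + 1/2) / (completedRiemannZeta (3/2) * D 1) with hc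
  have hcne : c ≠ 0 := by
    rw [hc]
    exact div_ne_zero (by norm_num) hdne
  have hmain : Tendsto (fun s : ℂ => (s - 1) * Δ₆ s) (nhdsWithin 1 {(1:ℂ)}ᶜ) (nhds c) := by
    have := (hA2.add hA).div hden hdne
    refine this.congr fun s => ?_
    simp only [Pi.div_apply, Δ₆]
    ring
  refine ⟨?_, c, hcne, hmain⟩
  -- norm part
  have hnorm : Tendsto (fun s : ℂ => ‖(s - 1) * Δ₆ s‖) (nhdsWithin 1 {(1:ℂ)}ᶜ) (nhds ‖c‖) :=
    hmain.norm
  have hinv : Tendsto (fun s : ℂ => ‖s - 1‖⁻¹) (nhdsWithin 1 {(1:ℂ)}ᶜ) atTop := by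
    apply tendsto_inv_nhdsGT_zero.comp
    rw [tendsto_nhdsWithin_iff]
    constructor
    · have : Tendsto (fun s : ℂ => ‖s - 1‖) (nhds 1) (nhds ‖(1:ℂ) - 1‖) :=
        ((continuous_id.sub continuous_const).norm).tendsto 1
      rw [show ‖(1:ℂ) - 1‖ = 0 by simp] at this
      exact this.mono_left nhdsWithin_le_nhds
    · filter_upwards [self_mem_nhdsWithin] with s hs
      simp only [Set.mem_compl_iff, Set.mem_singleton_iff] at hs
      exact Set.mem_Ioi.mpr (norm_pos_iff.mpr (sub_ne_zero.mpr hs))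
  have := hinv.atTop_mul_pos (norm_pos_iff.mpr hcne) hnorm
  refine this.congr' ?_
  filter_upwards [self_mem_nhdsWithin] with s hs
  simp only [Set.mem_compl_iff, Set.mem_singleton_iff] at hs
  rw [norm_mul, ← mul_assoc, inv_mul_cancel₀ (norm_ne_zero_iff.mpr (sub_ne_zero.mpr hs)), one_mul]
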